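/- Let α ≤ β be real numbers. There exists x̄ ∈ ℝⁿ with α < h(x̄) < β if and only if there exist x̂ ∈ ℝⁿ and a real symmetric n×n matrix X̂ with X̂ − x̂x̂ᵀ positive definite such that α < B•X̂ + 2bᵀx̂ + d < β, where B•X̂ denotes the trace inner product Σ_{i,j} B_{ij} X̂_{ij}. -/

import Mathlib

open Matrix

private lemma quad_expand {n : ℕ} (B : Matrix (Fin n) (Fin n) ℝ) (x : Fin n → ℝ) :
    x ⬝ᵥ B *ᵥ x = ∑ i, ∑ j, B i j * (x i * x j) := by
  simp only [dotProduct, mulVec, Finset.mul_sum]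
  exact Finset.sum_congr rfl fun i _ => Finset.sum_congr rfl fun j _ => by ring

private lemma key_id {n : ℕ} (B : Matrix (Fin n) (Fin n) ℝ) (b : Fin n → ℝ) (d : ℝ)
    (x p : Fin n → ℝ) :
    ((x+p) ⬝ᵥ B *ᵥ (x+p) + 2*(b ⬝ᵥ (x+p)) + d) + ((x-p) ⬝ᵥ B *ᵥ (x-p) + 2*(b ⬝ᵥ (x-p)) + d)
      = 2*(x ⬝ᵥ B *ᵥ x + 2*(b ⬝ᵥ x) + d) + 2*(p ⬝ᵥ B *ᵥ p) := by
  simp only [mulVec_add, mulVec_sub, dotProduct_add, add_dotProduct, dotProduct_sub,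
    sub_dotProduct]
  ring

private lemma bracket {n : ℕ} (B : Matrix (Fin n) (Fin n) ℝ) (b : Fin n → ℝ) (d : ℝ)
    (p : Fin n → (Fin n → ℝ)) (x0 : Fin n → ℝ) (s : Finset (Fin n)) :
    (∃ y : Fin n → ℝ, y ⬝ᵥ B *ᵥ y + 2*(b ⬝ᵥ y) + d
        ≤ x0 ⬝ᵥ B *ᵥ x0 + 2*(b ⬝ᵥ x0) + d + ∑ i ∈ s, p i ⬝ᵥ B *ᵥ p i) ∧
    (∃ y : Fin n → ℝ, x0 ⬝ᵥ B *ᵥ x0 + 2*(b ⬝ᵥ x0) + d + ∑ i ∈ s, p i ⬝ᵥ B *ᵥ p i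
        ≤ y ⬝ᵥ B *ᵥ y + 2*(b ⬝ᵥ y) + d) := by
  classical
  induction s using Finset.induction with
  | empty => exact ⟨⟨x0, by simp⟩, ⟨x0, by simp⟩⟩
  | insert _ _ hi ih =>
    rename_i a s
    obtain ⟨⟨ylo, hylo⟩, ⟨yhi, hyhi⟩⟩ := ih
    rw [Finset.sum_insert hi]
    constructor
    · have hk := key_id B b d ylo (p a)
      rcases le_total ((ylo + p a) ⬝ᵥ B *ᵥ (ylo + p a) + 2*(b ⬝ᵥ (ylo + p a)) + d)
        ((ylo - p a) ⬝ᵥ B *ᵥ (ylo - p a) + 2*(b ⬝ᵥ (ylo - p a)) + d) with h | h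
      · exact ⟨ylo + p a, by linarith⟩
      · exact ⟨ylo - p a, by linarith⟩
    · have hk := key_id B b d yhi (p a)
      rcases le_total ((yhi + p a) ⬝ᵥ B *ᵥ (yhi + p a) + 2*(b ⬝ᵥ (yhi + p a)) + d)
        ((yhi - p a) ⬝ᵥ B *ᵥ (yhi - p a) + 2*(b ⬝ᵥ (yhi - p a)) + d) with h | h
      · exact ⟨yhi - p a, by linarith⟩
      · exact ⟨yhi + p a, by linarith⟩

private lemma h_continuous {n : ℕ} (B : Matrix (Fin n) (Fin n) ℝ) (b : Fin n → ℝ) (d : ℝ) :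
    Continuous fun x : Fin n → ℝ => x ⬝ᵥ B *ᵥ x + 2*(b ⬝ᵥ x) + d := by
  simp only [dotProduct, mulVec]
  fun_prop

private lemma smul_one_posDef {n : ℕ} {ε : ℝ} (hε : 0 < ε) :
    ((ε • 1 : Matrix (Fin n) (Fin n) ℝ)).PosDef := by
  refine Matrix.PosDef.of_dotProduct_mulVec_pos ?_ ?_
  · rw [Matrix.IsHermitian]; ext i j
    simp [Matrix.one_apply, eq_comm]
  · intro x hx
    have h1 : (ε • (1 : Matrix (Fin n) (Fin n) ℝ)) *ᵥ x = ε • x := by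
      rw [smul_mulVec, one_mulVec]
    have h2 : star x = x := by simp
    rw [h1, h2]
    have h4 : x ⬝ᵥ (ε • x) = ε * (x ⬝ᵥ x) := by simp [dotProduct_smul, smul_eq_mul]
    rw [h4]
    have h3 : (0:ℝ) < x ⬝ᵥ x := by
      have := Matrix.dotProduct_self_star_pos_iff (v := x)
      simp only [star_trivial] at this
      exact this.mpr hx
    positivity

private lemma value_eps {n : ℕ} (B : Matrix (Fin n) (Fin n) ℝ) (x : Fin n → ℝ) (ε : ℝ) :
    ∑ i, ∑ j, B i j * (Matrix.vecMulVec x x + ε • (1 : Matrix (Fin n) (Fin n) ℝ)) i j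
      = x ⬝ᵥ B *ᵥ x + ε * ∑ i, B i i := by
  simp only [Matrix.add_apply, Matrix.smul_apply, Matrix.vecMulVec_apply, Matrix.one_apply,
    smul_eq_mul, mul_add, Finset.sum_add_distrib, mul_ite, mul_one, mul_zero,
    Finset.sum_ite_eq, Finset.mem_univ, if_true]
  rw [← quad_expand B x, Finset.mul_sum]
  congr 1
  exact Finset.sum_congr rfl fun i _ => by ring

/-- The Slater condition `α < h(x̄) < β` is equivalent to the relative interior
constraint qualification `α < B•X̂ + 2bᵀx̂ + d < β` for some `X̂ ≻ x̂x̂ᵀ`. -/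
theorem slater_iff_ricq (n : ℕ) (hn : 0 < n)
    (B : Matrix (Fin n) (Fin n) ℝ) (hB : B.IsSymm) (b : Fin n → ℝ) (d : ℝ)
    (α β : ℝ) (hαβ : α ≤ β) :
    (∃ xbar : Fin n → ℝ, α < xbar ⬝ᵥ B *ᵥ xbar + 2 * (b ⬝ᵥ xbar) + d ∧
        xbar ⬝ᵥ B *ᵥ xbar + 2 * (b ⬝ᵥ xbar) + d < β) ↔
      (∃ (xhat : Fin n → ℝ) (Xhat : Matrix (Fin n) (Fin n) ℝ), Xhat.IsSymm ∧
        (Xhat - Matrix.vecMulVec xhat xhat).PosDef ∧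
        α < (∑ i : Fin n, ∑ j : Fin n, B i j * Xhat i j) + 2 * (b ⬝ᵥ xhat) + d ∧
        (∑ i : Fin n, ∑ j : Fin n, B i j * Xhat i j) + 2 * (b ⬝ᵥ xhat) + d < β) := by
  constructor
  · rintro ⟨x, h1, h2⟩
    set v := x ⬝ᵥ B *ᵥ x + 2 * (b ⬝ᵥ x) + d with hv
    set tr := ∑ i, B i i with htr
    set D := |tr| + 1 with hD
    have hD0 : (0:ℝ) < D := by positivity
    set ε := min 1 (min ((β - v)/D) ((v - α)/D)) with hεdef
    have hε : 0 < ε :=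
      lt_min one_pos (lt_min (div_pos (by linarith) hD0) (div_pos (by linarith) hD0))
    have hε1 : ε ≤ (β - v)/D := le_trans (min_le_right _ _) (min_le_left _ _)
    have hε2 : ε ≤ (v - α)/D := le_trans (min_le_right _ _) (min_le_right _ _)
    have hεD1 : ε * D ≤ β - v := (le_div_iff₀ hD0).mp hε1
    have hεD2 : ε * D ≤ v - α := (le_div_iff₀ hD0).mp hε2
    have habs1 : ε * tr ≤ ε * |tr| := mul_le_mul_of_nonneg_left (le_abs_self tr) hε.le
    have habs2 : ε * (-|tr|) ≤ ε * tr := mul_le_mul_of_nonneg_left (neg_abs_le tr) hε.le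
    have hmul : ε * D = ε * |tr| + ε := by rw [hD]; ring
    have hneg : ε * (-|tr|) = -(ε * |tr|) := by ring
    refine ⟨x, Matrix.vecMulVec x x + ε • 1, ?_, ?_, ?_, ?_⟩
    · rw [Matrix.IsSymm]; ext i j
      simp [Matrix.vecMulVec_apply, Matrix.one_apply, eq_comm, mul_comm]
    · rw [add_sub_cancel_left]
      exact smul_one_posDef hε
    · rw [value_eps B x ε, ← htr]
      have : x ⬝ᵥ B *ᵥ x + ε * tr + 2 * (b ⬝ᵥ x) + d = v + ε * tr := by rw [hv]; ring
      rw [this]; linarith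
    · rw [value_eps B x ε, ← htr]
      have : x ⬝ᵥ B *ᵥ x + ε * tr + 2 * (b ⬝ᵥ x) + d = v + ε * tr := by rw [hv]; ring
      rw [this]; linarith
  · rintro ⟨xh, X, hXs, hpd, hl, hu⟩
    open scoped MatrixOrder in obtain ⟨A, hA⟩ := CStarAlgebra.nonneg_iff_eq_star_mul_self.mp hpd.posSemidef.nonneg
    have hX : X = Aᴴ * A + Matrix.vecMulVec xh xh := sub_eq_iff_eq_add.mp hA
    have hval : (∑ i, ∑ j, B i j * X i j)
        = (∑ k, (A k) ⬝ᵥ B *ᵥ (A k)) + xh ⬝ᵥ B *ᵥ xh := by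
      rw [hX]
      simp only [Matrix.add_apply, Matrix.conjTranspose_apply, Matrix.mul_apply, star_trivial,
        Matrix.vecMulVec_apply, mul_add, Finset.sum_add_distrib]
      congr 1
      · simp_rw [Finset.mul_sum]
        calc (∑ i, ∑ j, ∑ k, B i j * (A k i * A k j))
            = ∑ i, ∑ k, ∑ j, B i j * (A k i * A k j) :=
              Finset.sum_congr rfl fun i _ => Finset.sum_comm
          _ = ∑ k, ∑ i, ∑ j, B i j * (A k i * A k j) := Finset.sum_comm
          _ = ∑ k, A k ⬝ᵥ B *ᵥ A k :=
              Finset.sum_congr rfl fun k _ => (quad_expand B (A k)).symm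
      · exact (quad_expand B xh).symm
    obtain ⟨⟨ylo, hylo⟩, ⟨yhi, hyhi⟩⟩ :=
      bracket B b d (fun k => A k) xh (Finset.univ : Finset (Fin n))
    set v := (∑ i, ∑ j, B i j * X i j) + 2 * (b ⬝ᵥ xh) + d with hv
    have hlov : ylo ⬝ᵥ B *ᵥ ylo + 2*(b ⬝ᵥ ylo) + d ≤ v := by rw [hv, hval]; linarith
    have hhiv : v ≤ yhi ⬝ᵥ B *ᵥ yhi + 2*(b ⬝ᵥ yhi) + d := by rw [hv, hval]; linarith
    set φ : ℝ → ℝ := fun t =>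
      (ylo + t • (yhi - ylo)) ⬝ᵥ B *ᵥ (ylo + t • (yhi - ylo))
        + 2 * (b ⬝ᵥ (ylo + t • (yhi - ylo))) + d with hφdef
    have hφc : Continuous φ :=
      (h_continuous B b d).comp
        (show Continuous fun t : ℝ => ylo + t • (yhi - ylo) by fun_prop)
    have hφ0 : φ 0 = ylo ⬝ᵥ B *ᵥ ylo + 2*(b ⬝ᵥ ylo) + d := by simp [hφdef]
    have hφ1 : φ 1 = yhi ⬝ᵥ B *ᵥ yhi + 2*(b ⬝ᵥ yhi) + d := by
      simp [hφdef, add_sub_cancel]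
    have hsub := intermediate_value_Icc (zero_le_one) hφc.continuousOn
    have hvmem : v ∈ Set.Icc (φ 0) (φ 1) := by
      rw [hφ0, hφ1]; exact ⟨hlov, hhiv⟩
    obtain ⟨t, _, ht⟩ := hsub hvmem
    refine ⟨ylo + t • (yhi - ylo), ?_, ?_⟩
    · have : (ylo + t • (yhi - ylo)) ⬝ᵥ B *ᵥ (ylo + t • (yhi - ylo))
          + 2 * (b ⬝ᵥ (ylo + t • (yhi - ylo))) + d = v := ht
      rw [this]; exact hl
    · have : (ylo + t • (yhi - ylo)) ⬝ᵥ B *ᵥ (ylo + t • (yhi - ylo))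
          + 2 * (b ⬝ᵥ (ylo + t • (yhi - ylo))) + d = v := ht
      rw [this]; exact hu
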